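/- arXiv:1701.02709 — 2 statements merged into one kernel-verified Lean document; each statement's English description precedes it below -/
import Mathlib

section
/- Let μ ∈ M(ℝ^d) be such that ∫ p² dμ > 0 for every nonzero polynomial p, and let {ℙ_n} be an orthonormal family of polynomials with respect to μ. Then for each n ≥ 1 the following are equivalent: (i) there exists a Gaussian cubature formula of degree 2n−1 for μ, i.e. points x_1, …, x_N ∈ ℝ^d with N = dim Π_{n−1}^d = binom(n−1+d, d) and real weights λ_1, …, λ_N such that ∫ f dμ = Σ_{k=1}^N λ_k f(x_k) for every polynomial f of total degree at most 2n−1; (ii) the vector ℙ_n has exactly dim Π_{n−1}^d common zeros, i.e. the set {x ∈ ℝ^d : P_α^n(x) = 0 for all |α| = n} has cardinality binom(n−1+d, d). -/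
open MvPolynomial Matrix MeasureTheory

noncomputable section

/-- Real polynomials in `d` variables. -/
abbrev MPoly (d : ℕ) : Type := MvPolynomial (Fin d) ℝ

/-- Multi-indices `α ∈ ℕ^d` of total degree `n`; there are `r_n^d = binom (n+d-1) n` of them. -/
abbrev Idx (d n : ℕ) : Type := {α : Fin d → ℕ // ∑ i, α i = n}

instance (d n : ℕ) : Fintype (Idx d n) :=
  Fintype.subtype (Finset.Nat.antidiagonalTuple d n)
    (fun _ => Finset.Nat.mem_antidiagonalTuple)

/-- The monomial `x^α`. -/
def mono {d : ℕ} (α : Fin d → ℕ) : MPoly d :=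
  MvPolynomial.monomial (Finsupp.equivFunOnFinite.symm α) 1

/-- Multi-indices `α ∈ ℕ^d` of total degree at most `n`. -/
abbrev IdxLe (d n : ℕ) : Type := {α : Fin d → ℕ // ∑ i, α i ≤ n}

instance (d n : ℕ) : Fintype (IdxLe d n) :=
  Fintype.subtype ((Finset.range (n+1)).biUnion fun k => Finset.Nat.antidiagonalTuple d k)
    (fun α => by
      simp only [Finset.mem_biUnion, Finset.mem_range, Finset.Nat.mem_antidiagonalTuple,
        Nat.lt_succ_iff]
      exact ⟨fun ⟨k, hk, he⟩ => he ▸ hk, fun h => ⟨_, h, rfl⟩⟩)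

/-- `P` is a polynomial of total degree strictly less than `n` (the zero polynomial belongs
to every such class). -/
def IsDegLt {d : ℕ} (P : MPoly d) (n : ℕ) : Prop := P = 0 ∨ P.totalDegree < n

/-- The family `{P m α : |α| = m ≤ n}` spans `Π_n^d`, the polynomials of total degree at
most `n`, for every `n`. -/
def SpansPi {d : ℕ} (P : ∀ n, Idx d n → MPoly d) : Prop :=
  ∀ n, Submodule.span ℝ {p | ∃ m, m ≤ n ∧ ∃ α : Idx d m, p = P m α} =
    MvPolynomial.restrictTotalDegree (Fin d) ℝ n

variable {d : ℕ}

/-- `μ` has all moments finite, i.e. `μ ∈ M(ℝ^d)`. -/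
def HasAllMoments (μ : Measure (Fin d → ℝ)) : Prop :=
  ∀ α : Fin d → ℕ, Integrable (fun x => ∏ i, x i ^ α i) μ

namespace GCaux

/-! ### Combinatorics -/

/-- `IdxLe d m` is equivalent to `Idx (d+1) m` by adding a slack variable. -/
def idxLeEquiv (d m : ℕ) : IdxLe d m ≃ Idx (d+1) m where
  toFun a := ⟨Fin.cons (m - ∑ i, a.1 i) a.1, by
    rw [Fin.sum_cons]
    have := a.2; omega⟩
  invFun b := ⟨fun i => b.1 i.succ, by
    have hb := b.2
    rw [Fin.sum_univ_succ] at hb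
    show ∑ i : Fin d, b.1 i.succ ≤ m
    omega⟩
  left_inv a := by
    apply Subtype.ext
    funext i
    dsimp
    rw [Fin.cons_succ]
  right_inv b := by
    apply Subtype.ext
    have hb := b.2
    rw [Fin.sum_univ_succ] at hb
    show Fin.cons (m - ∑ i : Fin d, b.1 i.succ) (fun i : Fin d => b.1 i.succ) = (b.1 : Fin (d+1) → ℕ)
    funext i
    refine Fin.cases ?_ (fun j => ?_) i
    · rw [Fin.cons_zero]; omega
    · rw [Fin.cons_succ]

lemma card_idxLe (d m : ℕ) : Fintype.card (IdxLe d m) = (m + d).choose d := by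
  rw [Fintype.card_congr ((idxLeEquiv d m).trans (Sym.equivNatSumOfFintype (Fin (d+1)) m).symm)]
  rw [Sym.card_sym_eq_multichoose, Fintype.card_fin, Nat.multichoose_eq]
  have h1 : d + 1 + m - 1 = m + d := by omega
  rw [h1, ← Nat.choose_symm (Nat.le_add_right m d)]
  congr 1
  omega

/-- Transfer a double sum over degrees `≤ m` to a sum over `IdxLe d m`. -/
def sigmaEquiv (d m : ℕ) : ((j : Fin (m+1)) × Idx d (j : ℕ)) ≃ IdxLe d m where
  toFun i := ⟨i.2.1, by rw [i.2.2]; exact Nat.lt_succ_iff.mp i.1.isLt⟩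
  invFun a := ⟨⟨∑ i, a.1 i, Nat.lt_succ_of_le a.2⟩, ⟨a.1, rfl⟩⟩
  left_inv := by
    rintro ⟨⟨j, hj⟩, α, hα⟩
    simp only [Fin.val_mk] at hα
    subst hα
    rfl
  right_inv a := rfl

lemma Fgen {M : Type*} (F : ∀ j : ℕ, Idx d j → M) (α : Fin d → ℕ) (k : ℕ) (h : ∑ i, α i = k) :
    F k ⟨α, h⟩ = F (∑ i, α i) ⟨α, rfl⟩ := by subst h; rfl

lemma sum_idxLe {M : Type*} [AddCommMonoid M] (m : ℕ) (F : ∀ j : ℕ, Idx d j → M) :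
    ∑ j ∈ Finset.range (m+1), ∑ α : Idx d j, F j α
      = ∑ a : IdxLe d m, F (∑ i, a.1 i) ⟨a.1, rfl⟩ := by
  rw [← Fin.sum_univ_eq_sum_range (fun j => ∑ α : Idx d j, F j α) (m+1)]
  rw [Finset.sum_sigma' Finset.univ (fun _ => Finset.univ)
    (fun (j : Fin (m+1)) (α : Idx d (j : ℕ)) => F (j : ℕ) α)]
  rw [Finset.univ_sigma_univ]
  refine Fintype.sum_equiv (sigmaEquiv d m) _ _ ?_
  rintro ⟨j, α, hα⟩
  exact Fgen F α _ hα

/-! ### The moment functional -/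

def L (μ : Measure (Fin d → ℝ)) (p : MPoly d) : ℝ := ∫ x, eval x p ∂μ

section Lbasic

variable {μ : Measure (Fin d → ℝ)}

lemma integrable_eval (hmom : HasAllMoments μ) (p : MPoly d) :
    Integrable (fun x => eval x p) μ := by
  have h : (fun x : Fin d → ℝ => eval x p)
      = fun x => ∑ γ ∈ p.support, coeff γ p * ∏ i, x i ^ γ i := funext fun x => eval_eq' x p
  rw [h]
  exact integrable_finset_sum _ fun γ _ => (hmom fun i => γ i).const_mul _

lemma L_sum (hmom : HasAllMoments μ) {ι : Type*} (s : Finset ι) (f : ι → MPoly d) :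
    L μ (∑ i ∈ s, f i) = ∑ i ∈ s, L μ (f i) := by
  simp only [L, map_sum]
  exact integral_finset_sum s fun i _ => integrable_eval hmom (f i)

lemma L_smul (c : ℝ) (p : MPoly d) : L μ (c • p) = c * L μ p := by
  simp only [L, smul_eval]
  exact integral_const_mul c _

lemma L_comb (hmom : HasAllMoments μ) {ι : Type*} (s : Finset ι) (c : ι → ℝ)
    (f : ι → MPoly d) (g : MPoly d) :
    L μ ((∑ i ∈ s, c i • f i) * g) = ∑ i ∈ s, c i * L μ (f i * g) := by
  rw [Finset.sum_mul]
  simp only [smul_mul_assoc]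
  rw [L_sum hmom]
  simp only [L_smul]

lemma L_comb2 (hmom : HasAllMoments μ) {s : Finset ℕ} {κ : ℕ → Type} [∀ j, Fintype (κ j)]
    (c : ∀ j, κ j → ℝ) (f : ∀ j, κ j → MPoly d) (g : MPoly d) :
    L μ ((∑ j ∈ s, ∑ α : κ j, c j α • f j α) * g)
      = ∑ j ∈ s, ∑ α : κ j, c j α * L μ (f j α * g) := by
  rw [Finset.sum_mul, L_sum hmom]
  refine Finset.sum_congr rfl fun j _ => ?_
  exact L_comb hmom _ _ _ _

lemma eval_comb2 {s : Finset ℕ} {κ : ℕ → Type} [∀ j, Fintype (κ j)]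
    (c : ∀ j, κ j → ℝ) (f : ∀ j, κ j → MPoly d) (u : Fin d → ℝ) :
    eval u (∑ j ∈ s, ∑ α : κ j, c j α • f j α)
      = ∑ j ∈ s, ∑ α : κ j, c j α * eval u (f j α) := by
  simp [smul_eval]

end Lbasic

/-! ### Orthonormal families -/

section ortho

variable {μ : Measure (Fin d → ℝ)} {P : ∀ n, Idx d n → MPoly d}

lemma L_on (hon : ∀ n (α β : Idx d n),
      ∫ x, eval x (P n α) * eval x (P n β) ∂μ = if α = β then 1 else 0)
    {n : ℕ} (α β : Idx d n) : L μ (P n α * P n β) = if α = β then 1 else 0 := by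
  simp only [L, eval_mul]
  exact hon n α β

lemma L_off (hoff : ∀ n m : ℕ, n ≠ m → ∀ (α : Idx d n) (β : Idx d m),
      ∫ x, eval x (P n α) * eval x (P m β) ∂μ = 0)
    {n m : ℕ} (h : n ≠ m) (α : Idx d n) (β : Idx d m) : L μ (P n α * P m β) = 0 := by
  simp only [L, eval_mul]
  exact hoff n m h α β

/-- The family indexed by `IdxLe d m`. -/
def eF (P : ∀ n, Idx d n → MPoly d) (m : ℕ) (a : IdxLe d m) : MPoly d :=
  P (∑ i, a.1 i) ⟨a.1, rfl⟩

lemma deg_eF (hdeg : ∀ n (α : Idx d n), (P n α).totalDegree = n) (m : ℕ) (a : IdxLe d m) :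
    (eF P m a).totalDegree ≤ m := by
  rw [eF, hdeg]; exact a.2

lemma L_eF (hon : ∀ n (α β : Idx d n),
      ∫ x, eval x (P n α) * eval x (P n β) ∂μ = if α = β then 1 else 0)
    (hoff : ∀ n m : ℕ, n ≠ m → ∀ (α : Idx d n) (β : Idx d m),
      ∫ x, eval x (P n α) * eval x (P m β) ∂μ = 0)
    (m : ℕ) (a b : IdxLe d m) :
    L μ (eF P m a * eF P m b) = if a = b then 1 else 0 := by
  classical
  obtain ⟨α, ha⟩ := a; obtain ⟨β, hb⟩ := b
  rw [eF, eF]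
  by_cases h : (∑ i, β i) = (∑ i, α i)
  · rw [← Fgen (fun j γ => P j γ) β _ h, Fgen (fun j γ => P j γ) β _ h]
    rw [show P (∑ i, β i) ⟨β, rfl⟩ = P (∑ i, α i) ⟨β, h⟩ from (Fgen (fun j γ => P j γ) β _ h).symm]
    rw [L_on hon]
    simp only [Subtype.mk.injEq]
  · rw [L_off hoff (fun hc => h hc.symm)]
    rw [if_neg]
    intro hab
    exact h (by rw [Subtype.mk.injEq] at hab; rw [hab])

end ortho

/-! ### Orthonormal expansion -/

section expansion

variable {μ : Measure (Fin d → ℝ)} {P : ∀ n, Idx d n → MPoly d}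
variable (hmom : HasAllMoments μ)
variable (hspan : SpansPi P)
variable (hon : ∀ n (α β : Idx d n),
      ∫ x, eval x (P n α) * eval x (P n β) ∂μ = if α = β then 1 else 0)
variable (hoff : ∀ n m : ℕ, n ≠ m → ∀ (α : Idx d n) (β : Idx d m),
      ∫ x, eval x (P n α) * eval x (P m β) ∂μ = 0)

include hmom hspan hon hoff in
lemma expansion {n : ℕ} {p : MPoly d} (hp : p.totalDegree ≤ n) :
    p = ∑ j ∈ Finset.range (n+1), ∑ α : Idx d j, L μ (p * P j α) • P j α := by
  classical
  set v : ((j : Fin (n+1)) × Idx d (j : ℕ)) → MPoly d := fun i => P i.1 i.2 with hv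
  have hrange : {q : MPoly d | ∃ m, m ≤ n ∧ ∃ α : Idx d m, q = P m α} = Set.range v := by
    ext q
    constructor
    · rintro ⟨m, hm, α, rfl⟩
      exact ⟨⟨⟨m, Nat.lt_succ_of_le hm⟩, α⟩, rfl⟩
    · rintro ⟨⟨j, α⟩, rfl⟩
      exact ⟨j, Nat.lt_succ_iff.mp j.isLt, α, rfl⟩
  have hp' : p ∈ Submodule.span ℝ (Set.range v) := by
    rw [← hrange, hspan n, mem_restrictTotalDegree]
    exact hp
  obtain ⟨c, hc⟩ := (Submodule.mem_span_range_iff_exists_fun ℝ).mp hp'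
  have key : ∀ i₀, L μ (p * v i₀) = c i₀ := by
    intro i₀
    rw [← hc, L_comb hmom]
    have hterm : ∀ i, c i * L μ (v i * v i₀) = if i = i₀ then c i else 0 := by
      intro i
      obtain ⟨j, α⟩ := i; obtain ⟨k, γ⟩ := i₀
      by_cases hjk : j = k
      · subst hjk
        rw [show v ⟨j, α⟩ * v ⟨j, γ⟩ = P (j : ℕ) α * P (j : ℕ) γ from rfl, L_on hon]
        by_cases hab : α = γ
        · subst hab; simp
        · rw [if_neg hab, if_neg (by simp [hab]), mul_zero]
      · rw [show v ⟨j, α⟩ * v ⟨k, γ⟩ = P (j : ℕ) α * P (k : ℕ) γ from rfl,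
          L_off hoff (fun hc' => hjk (Fin.ext hc'))]
        rw [mul_zero, if_neg (by simp [hjk])]
    rw [Finset.sum_congr rfl fun i _ => hterm i, Finset.sum_ite_eq' Finset.univ i₀ c,
      if_pos (Finset.mem_univ _)]
  calc p = ∑ i, c i • v i := hc.symm
    _ = ∑ i, L μ (p * v i) • v i := by
        refine Finset.sum_congr rfl fun i _ => ?_
        rw [key i]
    _ = ∑ j : Fin (n+1), ∑ α : Idx d (j : ℕ), L μ (p * P (j : ℕ) α) • P (j : ℕ) α := by
        rw [Finset.sum_sigma' Finset.univ (fun _ => Finset.univ)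
          (fun (j : Fin (n+1)) (α : Idx d (j : ℕ)) => L μ (p * P (j : ℕ) α) • P (j : ℕ) α)]
        rw [Finset.univ_sigma_univ]
    _ = ∑ j ∈ Finset.range (n+1), ∑ α : Idx d j, L μ (p * P j α) • P j α :=
        Fin.sum_univ_eq_sum_range (fun j => ∑ α : Idx d j, L μ (p * P j α) • P j α) (n+1)

include hmom hspan hon hoff in
lemma expansion' {m : ℕ} {p : MPoly d} (hp : p.totalDegree ≤ m) :
    p = ∑ a : IdxLe d m, L μ (p * eF P m a) • eF P m a := by
  conv_lhs => rw [expansion hmom hspan hon hoff hp]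
  exact sum_idxLe m (fun j α => L μ (p * P j α) • P j α)

include hmom hspan hon hoff in
lemma expansion'' {m : ℕ} {q : MPoly d} (hq : q.totalDegree ≤ m+1) :
    q = (∑ a : IdxLe d m, L μ (q * eF P m a) • eF P m a)
      + ∑ β : Idx d (m+1), L μ (q * P (m+1) β) • P (m+1) β := by
  conv_lhs => rw [expansion hmom hspan hon hoff hq]
  rw [Finset.sum_range_succ, sum_idxLe m (fun j α => L μ (q * P j α) • P j α)]
  rfl

include hmom hspan hon hoff in
lemma L_mul_hi {k n : ℕ} (hkn : k < n) {p : MPoly d} (hp : p.totalDegree ≤ k) (γ : Idx d n) :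
    L μ (p * P n γ) = 0 := by
  rw [expansion hmom hspan hon hoff hp, L_comb2 hmom]
  refine Finset.sum_eq_zero fun j hj => Finset.sum_eq_zero fun α _ => ?_
  rw [L_off hoff (by rw [Finset.mem_range] at hj; omega)]
  ring

end expansion

/-! ### The reproducing kernel -/

section kernel

variable {μ : Measure (Fin d → ℝ)} {P : ∀ n, Idx d n → MPoly d}
variable (hmom : HasAllMoments μ)
variable (hspan : SpansPi P)
variable (hdeg : ∀ n (α : Idx d n), (P n α).totalDegree = n)
variable (hon : ∀ n (α β : Idx d n),
      ∫ x, eval x (P n α) * eval x (P n β) ∂μ = if α = β then 1 else 0)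
variable (hoff : ∀ n m : ℕ, n ≠ m → ∀ (α : Idx d n) (β : Idx d m),
      ∫ x, eval x (P n α) * eval x (P m β) ∂μ = 0)

def Kp (P : ∀ n, Idx d n → MPoly d) (m : ℕ) (v : Fin d → ℝ) : MPoly d :=
  ∑ j ∈ Finset.range (m+1), ∑ α : Idx d j, eval v (P j α) • P j α

include hdeg in
lemma deg_Kp (m : ℕ) (v : Fin d → ℝ) : (Kp P m v).totalDegree ≤ m := by
  refine (totalDegree_finset_sum _ _).trans (Finset.sup_le fun j hj => ?_)
  refine (totalDegree_finset_sum _ _).trans (Finset.sup_le fun α _ => ?_)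
  refine (totalDegree_smul_le _ _).trans ?_
  rw [hdeg]
  rw [Finset.mem_range] at hj
  omega

lemma eval_Kp (m : ℕ) (u v : Fin d → ℝ) :
    eval u (Kp P m v) = ∑ j ∈ Finset.range (m+1), ∑ α : Idx d j,
      eval v (P j α) * eval u (P j α) :=
  eval_comb2 _ _ u

lemma dot_eF (m : ℕ) (u v : Fin d → ℝ) :
    ∑ a : IdxLe d m, eval u (eF P m a) * eval v (eF P m a) = eval v (Kp P m u) := by
  rw [eval_Kp, sum_idxLe m (fun j α => eval u (P j α) * eval v (P j α))]
  rfl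

include hmom hspan hon hoff in
lemma repro {m : ℕ} {v : Fin d → ℝ} (hv : ∀ α : Idx d (m+1), eval v (P (m+1) α) = 0)
    {q : MPoly d} (hq : q.totalDegree ≤ m+1) :
    L μ (q * Kp P m v) = eval v q := by
  have hKq : L μ (q * Kp P m v)
      = ∑ j ∈ Finset.range (m+1), ∑ α : Idx d j, eval v (P j α) * L μ (q * P j α) := by
    rw [mul_comm, Kp, L_comb2 hmom]
    refine Finset.sum_congr rfl fun j _ => Finset.sum_congr rfl fun α _ => ?_
    rw [mul_comm (P j α) q]
  have heval := congrArg (eval v) (expansion hmom hspan hon hoff hq)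
  rw [eval_comb2, Finset.sum_range_succ] at heval
  have hlast : ∑ α : Idx d (m+1), L μ (q * P (m+1) α) * eval v (P (m+1) α) = 0 := by
    refine Finset.sum_eq_zero fun α _ => ?_
    rw [hv α, mul_zero]
  rw [hlast, add_zero] at heval
  rw [hKq, heval]
  exact Finset.sum_congr rfl fun j _ => Finset.sum_congr rfl fun α _ => mul_comm _ _

include hmom hspan hdeg hon hoff in
lemma keyOrth {m : ℕ} {u v : Fin d → ℝ}
    (hu : ∀ α : Idx d (m+1), eval u (P (m+1) α) = 0)
    (hv : ∀ α : Idx d (m+1), eval v (P (m+1) α) = 0)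
    (huv : u ≠ v) : eval u (Kp P m v) = 0 := by
  obtain ⟨i, hi⟩ : ∃ i, u i ≠ v i := by
    by_contra h
    push_neg at h
    exact huv (funext h)
  have hXdeg : (X i - C (v i) : MPoly d).totalDegree ≤ 1 := by
    refine (totalDegree_sub _ _).trans ?_
    rw [totalDegree_X, totalDegree_C]
    omega
  set r : MPoly d := (X i - C (v i)) * Kp P m v with hr
  have hdegr : r.totalDegree ≤ m+1 := by
    refine (totalDegree_mul _ _).trans ?_
    have := deg_Kp (P := P) hdeg m v
    omega
  have hcoef : ∀ j, j ≤ m → ∀ γ : Idx d j, L μ (r * P j γ) = 0 := by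
    intro j hj γ
    have hre : r * P j γ = ((X i - C (v i)) * P j γ) * Kp P m v := by ring
    rw [hre, repro hmom hspan hon hoff hv]
    · rw [eval_mul]
      simp
    · refine (totalDegree_mul _ _).trans ?_
      rw [hdeg]
      omega
  have heval := congrArg (eval u) (expansion hmom hspan hon hoff hdegr)
  rw [eval_comb2, Finset.sum_range_succ] at heval
  have h0 : ∑ j ∈ Finset.range (m+1), ∑ γ : Idx d j,
      L μ (r * P j γ) * eval u (P j γ) = 0 := by
    refine Finset.sum_eq_zero fun j hj => Finset.sum_eq_zero fun γ _ => ?_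
    rw [Finset.mem_range] at hj
    rw [hcoef j (by omega) γ, zero_mul]
  have h1 : ∑ γ : Idx d (m+1), L μ (r * P (m+1) γ) * eval u (P (m+1) γ) = 0 := by
    refine Finset.sum_eq_zero fun γ _ => ?_
    rw [hu γ, mul_zero]
  rw [h0, h1, add_zero] at heval
  rw [hr, eval_mul] at heval
  have : (u i - v i) * eval u (Kp P m v) = 0 := by
    simpa using heval
  rcases mul_eq_zero.mp this with h | h
  · exact absurd (sub_eq_zero.mp h) hi
  · exact h

lemma eqC_of_deg0 {p : MPoly d} (h : p.totalDegree = 0) : p = C (coeff 0 p) := by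
  classical
  ext γ
  by_cases hγ : γ = 0
  · subst hγ; simp
  · rw [coeff_C, if_neg (fun hc => hγ hc.symm)]
    by_contra hne
    have hsup : γ ∈ p.support := mem_support_iff.mpr hne
    have hall := (totalDegree_eq_zero_iff _ p).mp h γ hsup
    exact hγ (Finsupp.ext hall)

include hmom hdeg hon in
lemma Kself_pos (m : ℕ) (u : Fin d → ℝ) : 0 < eval u (Kp P m u) := by
  rw [eval_Kp]
  have hterm : ∀ j ∈ Finset.range (m+1),
      (0:ℝ) ≤ ∑ α : Idx d j, eval u (P j α) * eval u (P j α) :=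
    fun j _ => Finset.sum_nonneg fun α _ => mul_self_nonneg _
  have h0 : (0:ℝ) < ∑ α : Idx d 0, eval u (P 0 α) * eval u (P 0 α) := by
    set α₀ : Idx d 0 := ⟨fun _ => 0, by simp⟩ with hα₀
    refine lt_of_lt_of_le ?_
      (Finset.single_le_sum (fun α _ => mul_self_nonneg _) (Finset.mem_univ α₀))
    rw [mul_self_pos]
    intro h0'
    have hc : P 0 α₀ = C (coeff 0 (P 0 α₀)) := eqC_of_deg0 (hdeg 0 α₀)
    have hcc : coeff 0 (P 0 α₀) = 0 := by
      rw [hc] at h0'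
      simpa using h0'
    have hP0 : P 0 α₀ = 0 := by rw [hc, hcc, map_zero]
    have := hon 0 α₀ α₀
    rw [hP0, if_pos rfl] at this
    simp at this
  exact lt_of_lt_of_le h0 (Finset.single_le_sum hterm (Finset.mem_range.mpr (Nat.succ_pos m)))

end kernel

/-! ### Bound on the number of common zeros -/

section zeros

variable {μ : Measure (Fin d → ℝ)} {P : ∀ n, Idx d n → MPoly d}
variable (hmom : HasAllMoments μ)
variable (hspan : SpansPi P)
variable (hdeg : ∀ n (α : Idx d n), (P n α).totalDegree = n)
variable (hon : ∀ n (α β : Idx d n),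
      ∫ x, eval x (P n α) * eval x (P n β) ∂μ = if α = β then 1 else 0)
variable (hoff : ∀ n m : ℕ, n ≠ m → ∀ (α : Idx d n) (β : Idx d m),
      ∫ x, eval x (P n α) * eval x (P m β) ∂μ = 0)

include hmom hspan hdeg hon hoff in
lemma zeros_card_le (m : ℕ) (T : Finset (Fin d → ℝ))
    (hT : ∀ u ∈ T, ∀ α : Idx d (m+1), eval u (P (m+1) α) = 0) :
    T.card ≤ Fintype.card (IdxLe d m) := by
  classical
  have hli : LinearIndependent ℝ
      (fun (u : {x // x ∈ T}) (a : IdxLe d m) => eval (u : Fin d → ℝ) (eF P m a)) := by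
    rw [Fintype.linearIndependent_iff]
    intro g hg w
    have hS : ∀ a : IdxLe d m,
        ∑ u : {x // x ∈ T}, g u * eval (u : Fin d → ℝ) (eF P m a) = 0 := by
      intro a
      have := congrFun hg a
      simpa [Finset.sum_apply] using this
    have hsum : ∑ u : {x // x ∈ T},
        g u * eval (u : Fin d → ℝ) (Kp P m (w : Fin d → ℝ)) = 0 := by
      calc ∑ u : {x // x ∈ T}, g u * eval (u : Fin d → ℝ) (Kp P m (w : Fin d → ℝ))
          = ∑ u : {x // x ∈ T}, ∑ a : IdxLe d m,
              g u * eval (u : Fin d → ℝ) (eF P m a) * eval (w : Fin d → ℝ) (eF P m a) := by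
            refine Finset.sum_congr rfl fun u _ => ?_
            rw [← dot_eF m (w : Fin d → ℝ) (u : Fin d → ℝ)]
            rw [Finset.mul_sum]
            refine Finset.sum_congr rfl fun a _ => by ring
        _ = ∑ a : IdxLe d m, ∑ u : {x // x ∈ T},
              g u * eval (u : Fin d → ℝ) (eF P m a) * eval (w : Fin d → ℝ) (eF P m a) :=
            Finset.sum_comm
        _ = 0 := by
            refine Finset.sum_eq_zero fun a _ => ?_
            rw [← Finset.sum_mul, hS a, zero_mul]
    have hiso : ∑ u : {x // x ∈ T},
        g u * eval (u : Fin d → ℝ) (Kp P m (w : Fin d → ℝ))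
        = g w * eval (w : Fin d → ℝ) (Kp P m (w : Fin d → ℝ)) := by
      refine Finset.sum_eq_single w (fun u _ hne => ?_) (fun h => absurd (Finset.mem_univ w) h)
      rw [keyOrth hmom hspan hdeg hon hoff (hT _ u.2) (hT _ w.2)
        (fun hc => hne (Subtype.ext hc)), mul_zero]
    rw [hiso] at hsum
    have hKpos := Kself_pos hmom hdeg hon m (w : Fin d → ℝ)
    exact by
      rcases mul_eq_zero.mp hsum with h | h
      · exact h
      · exact absurd h (ne_of_gt hKpos)
  have hcard := hli.fintype_card_le_finrank
  rwa [Module.finrank_fintype_fun_eq_card, Fintype.card_coe] at hcard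

include hmom hspan hdeg hon hoff in
lemma zeros_finite (m : ℕ) :
    {x : Fin d → ℝ | ∀ α : Idx d (m+1), eval x (P (m+1) α) = 0}.Finite := by
  by_contra hinf
  obtain ⟨T, hTsub, hTcard⟩ :=
    Set.Infinite.exists_subset_card_eq hinf (Fintype.card (IdxLe d m) + 1)
  have := zeros_card_le hmom hspan hdeg hon hoff m T (fun u hu => hTsub hu)
  omega

include hmom hspan hdeg hon hoff in
lemma zeros_ncard_le (m : ℕ) :
    {x : Fin d → ℝ | ∀ α : Idx d (m+1), eval x (P (m+1) α) = 0}.ncard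
      ≤ Fintype.card (IdxLe d m) := by
  have hfin := zeros_finite hmom hspan hdeg hon hoff m
  rw [Set.ncard_eq_toFinset_card _ hfin]
  exact zeros_card_le hmom hspan hdeg hon hoff m _ (fun u hu => (hfin.mem_toFinset).mp hu)

end zeros

/-! ### Splitting monomials and further helpers -/

section split

variable {μ : Measure (Fin d → ℝ)}

lemma L_add (hmom : HasAllMoments μ) (p q : MPoly d) : L μ (p + q) = L μ p + L μ q := by
  simp only [L, map_add]
  exact integral_add (integrable_eval hmom p) (integrable_eval hmom q)

lemma exists_part (t : ℕ) (γ : Fin d → ℕ) (ht : t ≤ ∑ i, γ i) :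
    ∃ a : Fin d → ℕ, (∀ i, a i ≤ γ i) ∧ ∑ i, a i = t := by
  classical
  induction t with
  | zero => exact ⟨fun _ => 0, fun i => Nat.zero_le _, by simp⟩
  | succ t ih =>
    obtain ⟨a, ha, hsum⟩ := ih (by omega)
    have hex : ∃ i, a i < γ i := by
      by_contra h
      push_neg at h
      have : ∑ i, γ i ≤ ∑ i, a i := Finset.sum_le_sum fun i _ => h i
      omega
    obtain ⟨i, hi⟩ := hex
    refine ⟨Function.update a i (a i + 1), fun j => ?_, ?_⟩
    · rcases eq_or_ne j i with rfl | hne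
      · rw [Function.update_self]; omega
      · rw [Function.update_of_ne hne]; exact ha j
    · rw [Finset.sum_update_of_mem (Finset.mem_univ i), ← Finset.erase_eq]
      rw [← Finset.sum_erase_add _ _ (Finset.mem_univ i)] at hsum
      omega

lemma deg_mono_le (A : Fin d →₀ ℕ) (c : ℝ) :
    ((monomial A) c : MPoly d).totalDegree ≤ A.sum fun _ e => e := by
  by_cases hc : c = 0
  · subst hc
    rw [map_zero, totalDegree_zero]
    exact Nat.zero_le _
  · rw [totalDegree_monomial _ hc]

lemma mono_split {γ : Fin d →₀ ℕ} {m : ℕ} (hγ : (γ.sum fun _ e => e) ≤ 2*m+1) (c : ℝ) :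
    ∃ A B : Fin d →₀ ℕ, (monomial γ) c = (monomial A) c * (monomial B) 1 ∧
      (A.sum fun _ e => e) ≤ m ∧ (B.sum fun _ e => e) ≤ m+1 := by
  classical
  have hsum : (γ.sum fun _ e => e) = ∑ i, γ i := Finsupp.sum_fintype _ _ (fun _ => rfl)
  obtain ⟨a, ha, hasum⟩ := exists_part (min m (∑ i, γ i)) γ (min_le_right _ _)
  set A : Fin d →₀ ℕ := Finsupp.equivFunOnFinite.symm a with hAdef
  have hA : ∀ i, A i = a i := fun i => rfl
  have hAle : A ≤ γ := by
    rw [Finsupp.le_def]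
    intro i
    rw [hA]
    exact ha i
  set B := γ - A with hBdef
  have hAB : A + B = γ := add_tsub_cancel_of_le hAle
  have hAsum : (A.sum fun _ e => e) = min m (∑ i, γ i) := by
    rw [Finsupp.sum_fintype _ _ (fun _ => rfl)]
    simp only [hA]
    exact hasum
  have hBsum : (A.sum fun _ e => e) + (B.sum fun _ e => e) = (γ.sum fun _ e => e) := by
    rw [Finsupp.sum_fintype _ _ (fun _ => rfl), Finsupp.sum_fintype _ _ (fun _ => rfl),
      Finsupp.sum_fintype _ _ (fun _ => rfl), ← Finset.sum_add_distrib]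
    refine Finset.sum_congr rfl fun i _ => ?_
    rw [← hAB, Finsupp.add_apply]
  refine ⟨A, B, ?_, ?_, ?_⟩
  · rw [monomial_mul, mul_one, hAB]
  · omega
  · omega

end split

end GCaux

open GCaux

/-- A Gaussian cubature formula of degree `2n-1` (`n = m+1`) with
`N = dim Π_{n-1}^d = binom (n-1+d) d` nodes exists for `μ` if and only if `ℙ_n` has exactly
`dim Π_{n-1}^d` common zeros. -/
theorem gaussian_cubature_iff_common_zeros
    (μ : Measure (Fin d → ℝ))
    (hmom : HasAllMoments μ)
    (hpos : ∀ p : MPoly d, p ≠ 0 → 0 < ∫ x, (eval x p) ^ 2 ∂μ)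
    (P : ∀ n, Idx d n → MPoly d)
    (hdeg : ∀ n (α : Idx d n), (P n α).totalDegree = n)
    (hspan : SpansPi P)
    (hon : ∀ n (α β : Idx d n),
      ∫ x, eval x (P n α) * eval x (P n β) ∂μ = if α = β then 1 else 0)
    (hoff : ∀ n m : ℕ, n ≠ m → ∀ (α : Idx d n) (β : Idx d m),
      ∫ x, eval x (P n α) * eval x (P m β) ∂μ = 0)
    (m : ℕ) :
    (∃ (x : Fin ((m + d).choose d) → (Fin d → ℝ)) (w : Fin ((m + d).choose d) → ℝ),
      Function.Injective x ∧
      ∀ f : MPoly d, f.totalDegree ≤ 2 * m + 1 →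
        ∫ y, eval y f ∂μ = ∑ k, w k * eval (x k) f) ↔
    {x : Fin d → ℝ | ∀ α : Idx d (m+1), eval x (P (m+1) α) = 0}.ncard = (m + d).choose d := by
  classical
  have hposL : ∀ p : MPoly d, p ≠ 0 → 0 < L μ (p * p) := by
    intro p hp
    have h := hpos p hp
    simpa [L, eval_mul, sq] using h
  set N := (m + d).choose d with hN
  set Z := {x : Fin d → ℝ | ∀ α : Idx d (m+1), eval x (P (m+1) α) = 0} with hZdef
  have hcard : Fintype.card (IdxLe d m) = N := card_idxLe d m
  have hZfin : Z.Finite := zeros_finite hmom hspan hdeg hon hoff m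
  have hZle : Z.ncard ≤ N := hcard ▸ zeros_ncard_le hmom hspan hdeg hon hoff m
  constructor
  · rintro ⟨x, w, hinj, hcub⟩
    have hcubL : ∀ f : MPoly d, f.totalDegree ≤ 2 * m + 1 →
        L μ f = ∑ k, w k * eval (x k) f := hcub
    set A : Matrix (Fin N) (IdxLe d m) ℝ := fun k a => eval (x k) (eF P m a) with hA
    have hker : ∀ c : IdxLe d m → ℝ, A.mulVec c = 0 → c = 0 := by
      intro c hc
      set p : MPoly d := ∑ a, c a • eF P m a with hp
      have hdegp : p.totalDegree ≤ m := by
        refine (totalDegree_finset_sum _ _).trans (Finset.sup_le fun a _ => ?_)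
        exact (totalDegree_smul_le _ _).trans (deg_eF hdeg m a)
      have hevalp : ∀ k, eval (x k) p = 0 := by
        intro k
        have h2 := congrFun hc k
        have h3 : A.mulVec c k = ∑ a, eval (x k) (eF P m a) * c a := rfl
        rw [h3, Pi.zero_apply] at h2
        rw [hp, map_sum]
        simp only [smul_eval]
        rw [← h2]
        exact Finset.sum_congr rfl fun a _ => mul_comm _ _
      have hp0 : p = 0 := by
        by_contra hp0
        have hdegpp : (p * p).totalDegree ≤ 2 * m + 1 :=
          (totalDegree_mul _ _).trans (by omega)
        have hzero : L μ (p * p) = 0 := by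
          rw [hcubL _ hdegpp]
          refine Finset.sum_eq_zero fun k _ => ?_
          rw [eval_mul, hevalp k, mul_zero, mul_zero]
        exact absurd hzero (ne_of_gt (hposL p hp0))
      funext b
      have h3 : L μ (p * eF P m b) = c b := by
        rw [hp, L_comb hmom]
        rw [Finset.sum_congr rfl
          (fun a _ => by rw [L_eF hon hoff m a b, mul_ite, mul_one, mul_zero])]
        rw [Finset.sum_ite_eq' Finset.univ b c, if_pos (Finset.mem_univ b)]
      rw [hp0, zero_mul] at h3
      have h4 : L μ 0 = 0 := by simp [L]
      rw [h4] at h3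
      exact h3.symm
    have hinj2 : Function.Injective A.mulVecLin := by
      rw [← LinearMap.ker_eq_bot, LinearMap.ker_eq_bot']
      exact fun c hc => hker c hc
    have hsurj : Function.Surjective A.mulVecLin := by
      have hrk : Module.finrank ℝ (IdxLe d m → ℝ) = Module.finrank ℝ (Fin N → ℝ) := by
        rw [Module.finrank_fintype_fun_eq_card, Module.finrank_fintype_fun_eq_card, hcard,
          Fintype.card_fin]
      exact (LinearMap.injective_iff_surjective_of_finrank_eq_finrank hrk).mp hinj2
    have hell : ∀ k : Fin N, ∃ ℓ : MPoly d, ℓ.totalDegree ≤ m ∧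
        ∀ j, eval (x j) ℓ = if j = k then 1 else 0 := by
      intro k
      obtain ⟨c, hcc⟩ := hsurj (Pi.single k 1)
      refine ⟨∑ a, c a • eF P m a, ?_, ?_⟩
      · refine (totalDegree_finset_sum _ _).trans (Finset.sup_le fun a _ => ?_)
        exact (totalDegree_smul_le _ _).trans (deg_eF hdeg m a)
      · intro j
        have h2 := congrFun hcc j
        rw [Pi.single_apply] at h2
        have h3 : A.mulVecLin c j = ∑ a, eval (x j) (eF P m a) * c a := rfl
        rw [h3] at h2
        rw [map_sum]
        simp only [smul_eval]
        rw [← h2]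
        exact Finset.sum_congr rfl fun a _ => mul_comm _ _
    choose ℓ hℓdeg hℓeval using hell
    have hℓne : ∀ k, ℓ k ≠ 0 := by
      intro k h0
      have h1 := hℓeval k k
      rw [h0, if_pos rfl] at h1
      simp at h1
    have hwk : ∀ k, w k = L μ (ℓ k * ℓ k) := by
      intro k
      rw [hcubL _ ((totalDegree_mul _ _).trans (by
        have := hℓdeg k; omega))]
      have hterm : ∀ j, w j * eval (x j) (ℓ k * ℓ k) = if j = k then w j else 0 := by
        intro j
        rw [eval_mul, hℓeval k j]
        by_cases h : j = k
        · rw [if_pos h, if_pos h]; ring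
        · rw [if_neg h, if_neg h]; ring
      rw [Finset.sum_congr rfl fun j _ => hterm j,
        Finset.sum_ite_eq' Finset.univ k w, if_pos (Finset.mem_univ k)]
    have hwpos : ∀ k, 0 < w k := fun k => by
      rw [hwk k]; exact hposL _ (hℓne k)
    have hxZ : ∀ k, x k ∈ Z := by
      intro k
      intro α
      have h1 : L μ (ℓ k * P (m+1) α) = 0 :=
        L_mul_hi hmom hspan hon hoff (Nat.lt_succ_self m) (hℓdeg k) α
      have h2 := hcubL (ℓ k * P (m+1) α) ((totalDegree_mul _ _).trans (by
        have := hℓdeg k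
        rw [hdeg]
        omega))
      rw [h1] at h2
      have h3 : ∑ j, w j * eval (x j) (ℓ k * P (m+1) α)
          = w k * eval (x k) (P (m+1) α) := by
        have hterm : ∀ j, w j * eval (x j) (ℓ k * P (m+1) α)
            = if j = k then w j * eval (x j) (P (m+1) α) else 0 := by
          intro j
          rw [eval_mul, hℓeval k j]
          by_cases h : j = k
          · rw [if_pos h, if_pos h]; ring
          · rw [if_neg h, if_neg h]; ring
        rw [Finset.sum_congr rfl fun j _ => hterm j,
          Finset.sum_ite_eq' Finset.univ k (fun j => w j * eval (x j) (P (m+1) α)),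
          if_pos (Finset.mem_univ k)]
      rw [h3] at h2
      rcases mul_eq_zero.mp h2.symm with h | h
      · exact absurd h (ne_of_gt (hwpos k))
      · exact h
    have hsub : Set.range x ⊆ Z := by
      rintro _ ⟨k, rfl⟩
      exact hxZ k
    have hrange : (Set.range x).ncard = N := by
      rw [← Set.image_univ, Set.ncard_image_of_injective _ hinj, Set.ncard_univ,
        Nat.card_eq_fintype_card, Fintype.card_fin]
    have hge := Set.ncard_le_ncard hsub hZfin
    omega
  · intro hzcard
    have hTcard : hZfin.toFinset.card = N := by
      rw [← Set.ncard_eq_toFinset_card _ hZfin]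
      exact hzcard
    set eqv := Finset.equivFinOfCardEq hTcard with heqv
    set x : Fin N → (Fin d → ℝ) := fun k => (eqv.symm k : Fin d → ℝ) with hx
    have hinj : Function.Injective x := by
      intro k l h
      exact eqv.symm.injective (Subtype.coe_injective h)
    have hxZ : ∀ k, x k ∈ Z := fun k => (hZfin.mem_toFinset).mp (eqv.symm k).2
    set lam : Fin N → ℝ := fun k => (eval (x k) (Kp P m (x k)))⁻¹ with hlam
    have hKpos : ∀ k, 0 < eval (x k) (Kp P m (x k)) :=
      fun k => Kself_pos hmom hdeg hon m (x k)
    have hlampos : ∀ k, 0 < lam k := fun k => inv_pos.mpr (hKpos k)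
    set κ := Fintype.equivFinOfCardEq hcard with hκ
    set M : Matrix (Fin N) (Fin N) ℝ :=
      fun k l => Real.sqrt (lam k) * eval (x k) (eF P m (κ.symm l)) with hM
    have hMMT : M * Mᵀ = 1 := by
      ext k l
      rw [Matrix.mul_apply, Matrix.one_apply]
      have hterm : ∀ j, M k j * Mᵀ j l = Real.sqrt (lam k) * Real.sqrt (lam l) *
          (eval (x k) (eF P m (κ.symm j)) * eval (x l) (eF P m (κ.symm j))) := by
        intro j
        rw [Matrix.transpose_apply]
        ring
      rw [Finset.sum_congr rfl fun j _ => hterm j, ← Finset.mul_sum]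
      rw [Equiv.sum_comp κ.symm (fun a => eval (x k) (eF P m a) * eval (x l) (eF P m a))]
      rw [dot_eF]
      by_cases hkl : k = l
      · subst hkl
        rw [if_pos rfl, Real.mul_self_sqrt (le_of_lt (hlampos k))]
        exact inv_mul_cancel₀ (ne_of_gt (hKpos k))
      · rw [if_neg hkl, keyOrth hmom hspan hdeg hon hoff (hxZ l) (hxZ k)
          (fun h => hkl (hinj h).symm), mul_zero]
    have hdon : ∀ a b : IdxLe d m,
        ∑ k, lam k * (eval (x k) (eF P m a) * eval (x k) (eF P m b))
          = if a = b then 1 else 0 := by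
      intro a b
      have h2 := mul_eq_one_comm.mp hMMT
      have h3 := congrFun (congrFun h2 (κ a)) (κ b)
      rw [Matrix.mul_apply, Matrix.one_apply] at h3
      have h4 : ∀ k, Mᵀ (κ a) k * M k (κ b)
          = lam k * (eval (x k) (eF P m a) * eval (x k) (eF P m b)) := by
        intro k
        rw [Matrix.transpose_apply]
        calc M k (κ a) * M k (κ b)
            = (Real.sqrt (lam k) * Real.sqrt (lam k)) *
              (eval (x k) (eF P m (κ.symm (κ a))) * eval (x k) (eF P m (κ.symm (κ b)))) := by
                ring
          _ = lam k * (eval (x k) (eF P m a) * eval (x k) (eF P m b)) := by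
                rw [Real.mul_self_sqrt (le_of_lt (hlampos k)), Equiv.symm_apply_apply,
                  Equiv.symm_apply_apply]
      rw [Finset.sum_congr rfl fun k _ => h4 k] at h3
      rw [h3]
      simp [Equiv.apply_eq_iff_eq]
    have hprod : ∀ p q : MPoly d, p.totalDegree ≤ m → q.totalDegree ≤ m+1 →
        L μ (p * q) = ∑ k, lam k * eval (x k) (p * q) := by
      intro p q hp hq
      set cp : IdxLe d m → ℝ := fun a => L μ (p * eF P m a) with hcp
      set cq : IdxLe d m → ℝ := fun a => L μ (q * eF P m a) with hcq
      set cq' : Idx d (m+1) → ℝ := fun β => L μ (q * P (m+1) β) with hcq'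
      have hpe := expansion' hmom hspan hon hoff hp
      have hqe := expansion'' hmom hspan hon hoff hq
      have hsplit : p * q = (∑ a, cq a • (p * eF P m a))
          + ∑ β : Idx d (m+1), cq' β • (p * P (m+1) β) := by
        conv_lhs => rw [hqe]
        rw [mul_add, Finset.mul_sum, Finset.mul_sum]
        congr 1
        · exact Finset.sum_congr rfl fun a _ => mul_smul_comm _ _ _
        · exact Finset.sum_congr rfl fun β _ => mul_smul_comm _ _ _
      have hL : L μ (p * q) = ∑ a, cq a * cp a := by
        rw [hsplit, L_add hmom, L_sum hmom, L_sum hmom]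
        simp only [L_smul]
        have hz : ∑ β : Idx d (m+1), cq' β * L μ (p * P (m+1) β) = 0 :=
          Finset.sum_eq_zero fun β _ => by
            rw [L_mul_hi hmom hspan hon hoff (Nat.lt_succ_self m) hp β, mul_zero]
        rw [hz, add_zero]
      have hevq : ∀ k, eval (x k) q = ∑ a, cq a * eval (x k) (eF P m a) := by
        intro k
        conv_lhs => rw [hqe]
        rw [map_add, map_sum, map_sum]
        simp only [smul_eval]
        have hz : ∑ β : Idx d (m+1), cq' β * eval (x k) (P (m+1) β) = 0 :=
          Finset.sum_eq_zero fun β _ => by rw [hxZ k β, mul_zero]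
        rw [hz, add_zero]
      have hevp : ∀ k, eval (x k) p = ∑ a, cp a * eval (x k) (eF P m a) := by
        intro k
        conv_lhs => rw [hpe]
        rw [map_sum]
        simp only [smul_eval]
        rfl
      have hR : ∑ k, lam k * eval (x k) (p * q) = ∑ a, cq a * cp a := by
        calc ∑ k, lam k * eval (x k) (p * q)
            = ∑ k, ∑ a, ∑ b, cp a * cq b *
                (lam k * (eval (x k) (eF P m a) * eval (x k) (eF P m b))) := by
              refine Finset.sum_congr rfl fun k _ => ?_
              rw [eval_mul, hevp k, hevq k, Finset.sum_mul_sum, Finset.mul_sum]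
              refine Finset.sum_congr rfl fun a _ => ?_
              rw [Finset.mul_sum]
              refine Finset.sum_congr rfl fun b _ => by ring
          _ = ∑ a, ∑ k, ∑ b, cp a * cq b *
                (lam k * (eval (x k) (eF P m a) * eval (x k) (eF P m b))) :=
              Finset.sum_comm
          _ = ∑ a, ∑ b, ∑ k, cp a * cq b *
                (lam k * (eval (x k) (eF P m a) * eval (x k) (eF P m b))) :=
              Finset.sum_congr rfl fun a _ => Finset.sum_comm
          _ = ∑ a, ∑ b, cp a * cq b *
                (∑ k, lam k * (eval (x k) (eF P m a) * eval (x k) (eF P m b))) :=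
              Finset.sum_congr rfl fun a _ => Finset.sum_congr rfl fun b _ =>
                (Finset.mul_sum _ _ _).symm
          _ = ∑ a, cq a * cp a := by
              refine Finset.sum_congr rfl fun a _ => ?_
              rw [Finset.sum_congr rfl fun b _ => by rw [hdon a b]]
              rw [Finset.sum_congr rfl (fun b _ => show cp a * cq b *
                  (if a = b then (1:ℝ) else 0) = if b = a then cq a * cp b else 0 from by
                by_cases h : a = b
                · subst h; rw [if_pos rfl, if_pos rfl]; ring
                · rw [if_neg h, if_neg (fun hc => h hc.symm), mul_zero])]
              rw [Finset.sum_ite_eq' Finset.univ a (fun b => cq a * cp b),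
                if_pos (Finset.mem_univ a)]
      rw [hL, hR]
    have hexact : ∀ f : MPoly d, f.totalDegree ≤ 2*m+1 →
        L μ f = ∑ k, lam k * eval (x k) f := by
      intro f hf
      conv_lhs => rw [as_sum f]
      conv_rhs => rw [as_sum f]
      rw [L_sum hmom]
      have hRs : ∑ k, lam k * eval (x k) (∑ γ ∈ f.support, monomial γ (coeff γ f))
          = ∑ γ ∈ f.support, ∑ k, lam k * eval (x k) (monomial γ (coeff γ f)) := by
        rw [Finset.sum_congr rfl fun k _ => by rw [map_sum, Finset.mul_sum]]
        exact Finset.sum_comm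
      rw [hRs]
      refine Finset.sum_congr rfl fun γ hγ => ?_
      obtain ⟨A, B, hAB, hA, hB⟩ := mono_split ((le_totalDegree hγ).trans hf) (coeff γ f)
      rw [hAB]
      exact hprod _ _ ((deg_mono_le A _).trans hA) ((deg_mono_le B _).trans hB)
    exact ⟨x, lam, hinj, fun f hf => hexact f hf⟩
end
end

section
/- Let L be a positive definite moment functional on real polynomials in d variables, {ℙ_k} an orthonormal family with respect to L, and A_{n,i} = L(x_i ℙ_n ℙ_{n+1}ᵀ) the three-term coefficient matrices. Define the kernel K_n(x, y) = Σ_{k=0}^n ℙ_kᵀ(x) ℙ_k(y) = Σ_{k=0}^n Σ_{|α|=k} P_α^k(x) P_α^k(y). Then for every n ≥ 0, every 1 ≤ i ≤ d, and all x = (x_1, …, x_d), y = (y_1, …, y_d) ∈ ℝ^d, the Christoffel–Darboux identity holds: (x_i − y_i) K_n(x, y) = [A_{n,i} ℙ_{n+1}(x)]ᵀ ℙ_n(y) − ℙ_nᵀ(x) [A_{n,i} ℙ_{n+1}(y)]. -/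
open MvPolynomial Matrix MeasureTheory

noncomputable section

variable {d : ℕ}

lemma cd_orth_low (L : MPoly d →ₗ[ℝ] ℝ) (P : ∀ n, Idx d n → MPoly d)
    (hspan : SpansPi P)
    (hoff : ∀ n m : ℕ, n ≠ m → ∀ (α : Idx d n) (β : Idx d m), L (P n α * P m β) = 0)
    {k : ℕ} (α : Idx d k) {q : MPoly d} (hq : q.totalDegree < k) :
    L (P k α * q) = 0 := by
  obtain ⟨k', rfl⟩ : ∃ k', k = k' + 1 := ⟨k - 1, by omega⟩
  set f : MPoly d →ₗ[ℝ] ℝ := L.comp (LinearMap.mulLeft ℝ (P (k'+1) α)) with hf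
  have hq' : q ∈ Submodule.span ℝ {p | ∃ m, m ≤ k' ∧ ∃ β : Idx d m, p = P m β} := by
    rw [hspan k']
    exact (MvPolynomial.mem_restrictTotalDegree _ _ _).2 (by omega)
  have hle : Submodule.span ℝ {p | ∃ m, m ≤ k' ∧ ∃ β : Idx d m, p = P m β} ≤
      LinearMap.ker f := by
    rw [Submodule.span_le]
    rintro p ⟨m, hm, β, rfl⟩
    simpa [f] using hoff (k'+1) m (by omega) α β
  simpa [f] using hle hq'

lemma cd_expansion (L : MPoly d →ₗ[ℝ] ℝ) (P : ∀ n, Idx d n → MPoly d)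
    (hspan : SpansPi P)
    (hon : ∀ n (α β : Idx d n), L (P n α * P n β) = if α = β then 1 else 0)
    (hoff : ∀ n m : ℕ, n ≠ m → ∀ (α : Idx d n) (β : Idx d m), L (P n α * P m β) = 0)
    {N : ℕ} {p : MPoly d} (hp : p.totalDegree ≤ N) :
    p = ∑ m ∈ Finset.range (N+1), ∑ β : Idx d m, L (p * P m β) • P m β := by
  set Q : (Σ m : Fin (N+1), Idx d m) → MPoly d := fun j => P j.1 j.2 with hQ
  have hset : Set.range Q = {q | ∃ m, m ≤ N ∧ ∃ β : Idx d m, q = P m β} := by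
    ext q
    constructor
    · rintro ⟨⟨m, β⟩, rfl⟩
      exact ⟨m, Nat.lt_succ_iff.1 m.2, β, rfl⟩
    · rintro ⟨m, hm, β, rfl⟩
      exact ⟨⟨⟨m, Nat.lt_succ_of_le hm⟩, β⟩, rfl⟩
  have hmem : p ∈ Submodule.span ℝ (Set.range Q) := by
    rw [hset, hspan N]
    exact (MvPolynomial.mem_restrictTotalDegree _ _ _).2 hp
  obtain ⟨c, hc⟩ := (Submodule.mem_span_range_iff_exists_fun ℝ).1 hmem
  have hcoef : ∀ j' : (Σ m : Fin (N+1), Idx d m), L (p * Q j') = c j' := by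
    intro j'
    rw [← hc]
    have h1 : L ((∑ j, c j • Q j) * Q j') = ∑ j, c j * L (Q j * Q j') := by
      rw [Finset.sum_mul, map_sum]
      exact Finset.sum_congr rfl fun j _ => by rw [smul_mul_assoc, _root_.map_smul, smul_eq_mul]
    rw [h1, Finset.sum_eq_single j']
    · obtain ⟨m', β'⟩ := j'
      rw [hQ]
      simp only []
      rw [hon m' β' β', if_pos rfl, mul_one]
    · rintro ⟨m, β⟩ _ hne
      by_cases hm : m = j'.1
      · obtain ⟨m', β'⟩ := j'
        simp only at hm
        subst hm
        have hb : β ≠ β' := fun h => hne (by rw [h])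
        simp only [hQ]
        rw [hon m β β', if_neg hb, mul_zero]
      · have : (m : ℕ) ≠ (j'.1 : ℕ) := fun h => hm (Fin.ext h)
        simp only [hQ]
        rw [hoff m j'.1 this β j'.2, mul_zero]
    · intro h
      exact absurd (Finset.mem_univ j') h
  have key : ∑ j : (Σ m : Fin (N+1), Idx d m), L (p * Q j) • Q j = p :=
    (Finset.sum_congr rfl fun j _ => by rw [hcoef j]).trans hc
  rw [← Fin.sum_univ_eq_sum_range (fun m => ∑ β : Idx d m, L (p * P m β) • P m β) (N+1),
    Finset.sum_sigma' (σ := fun m : Fin (N+1) => Idx d m) Finset.univ (fun _ => Finset.univ)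
      (fun m β => L (p * P m β) • P m β), Finset.univ_sigma_univ]
  exact key.symm

/-- The cross term `Σ_α Σ_β L(x_i P_kα P_{k+1}β) P_{k+1}β(x) P_kα(y)`. -/
def cdG (L : MPoly d →ₗ[ℝ] ℝ) (P : ∀ n, Idx d n → MPoly d) (i : Fin d)
    (k : ℕ) (x y : Fin d → ℝ) : ℝ :=
  ∑ α : Idx d k, ∑ β : Idx d (k+1),
    L (X i * P k α * P (k+1) β) * eval x (P (k+1) β) * eval y (P k α)

lemma cd_step (L : MPoly d →ₗ[ℝ] ℝ) (P : ∀ n, Idx d n → MPoly d)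
    (hdeg : ∀ n (α : Idx d n), (P n α).totalDegree = n)
    (hspan : SpansPi P)
    (hon : ∀ n (α β : Idx d n), L (P n α * P n β) = if α = β then 1 else 0)
    (hoff : ∀ n m : ℕ, n ≠ m → ∀ (α : Idx d n) (β : Idx d m), L (P n α * P m β) = 0)
    (i : Fin d) (x y : Fin d → ℝ) (k : ℕ) :
    (x i - y i) * ∑ α : Idx d k, eval x (P k α) * eval y (P k α) =
      (cdG L P i k x y - cdG L P i k y x) -
        (match k with
          | 0 => 0
          | k' + 1 => cdG L P i k' x y - cdG L P i k' y x) := by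
  -- expansion of `x_i P_kα` at a point
  have hev : ∀ (z : Fin d → ℝ) (α : Idx d k),
      z i * eval z (P k α) =
        ∑ m ∈ Finset.range (k+2), ∑ β : Idx d m,
          L (X i * P k α * P m β) * eval z (P m β) := by
    intro z α
    have hdp : (X i * P k α).totalDegree ≤ k + 1 := by
      refine le_trans (MvPolynomial.totalDegree_mul _ _) ?_
      rw [MvPolynomial.totalDegree_X, hdeg k α]
      omega
    have h := cd_expansion L P hspan hon hoff hdp
    calc z i * eval z (P k α) = eval z (X i * P k α) := by simp
      _ = _ := by
        conv_lhs => rw [h]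
        rw [map_sum]
        refine Finset.sum_congr rfl fun m _ => ?_
        rw [map_sum]
        exact Finset.sum_congr rfl fun β _ => by
          rw [MvPolynomial.smul_eval]
  -- the double sum at level m
  set W : ℕ → ℝ := fun m => ∑ α : Idx d k, ∑ β : Idx d m,
    L (X i * P k α * P m β) *
      (eval x (P m β) * eval y (P k α) - eval x (P k α) * eval y (P m β)) with hW
  have hLHS : (x i - y i) * ∑ α : Idx d k, eval x (P k α) * eval y (P k α) =
      ∑ m ∈ Finset.range (k+2), W m := by
    have h1 : ∀ α : Idx d k, (x i - y i) * (eval x (P k α) * eval y (P k α)) =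
        ∑ m ∈ Finset.range (k+2), ∑ β : Idx d m,
          L (X i * P k α * P m β) *
            (eval x (P m β) * eval y (P k α) - eval x (P k α) * eval y (P m β)) := by
      intro α
      calc (x i - y i) * (eval x (P k α) * eval y (P k α))
          = (x i * eval x (P k α)) * eval y (P k α)
            - eval x (P k α) * (y i * eval y (P k α)) := by ring
        _ = (∑ m ∈ Finset.range (k+2), ∑ β : Idx d m,
              L (X i * P k α * P m β) * eval x (P m β)) * eval y (P k α)
            - eval x (P k α) * (∑ m ∈ Finset.range (k+2), ∑ β : Idx d m,
              L (X i * P k α * P m β) * eval y (P m β)) := by rw [hev x α, hev y α]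
        _ = _ := by
          rw [Finset.sum_mul, Finset.mul_sum, ← Finset.sum_sub_distrib]
          refine Finset.sum_congr rfl fun m _ => ?_
          rw [Finset.sum_mul, Finset.mul_sum, ← Finset.sum_sub_distrib]
          exact Finset.sum_congr rfl fun β _ => by ring
    rw [Finset.mul_sum, Finset.sum_congr rfl fun α _ => h1 α, Finset.sum_comm]
  -- the individual levels
  have hWlow : ∀ m, m + 1 < k → W m = 0 := by
    intro m hm
    refine Finset.sum_eq_zero fun α _ => Finset.sum_eq_zero fun β _ => ?_
    have hdm : (X i * P m β).totalDegree < k := by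
      refine lt_of_le_of_lt (MvPolynomial.totalDegree_mul _ _) ?_
      rw [MvPolynomial.totalDegree_X, hdeg m β]
      omega
    have h0 := cd_orth_low L P hspan hoff α hdm
    have : L (X i * P k α * P m β) = 0 := by
      rw [show X i * P k α * P m β = P k α * (X i * P m β) by ring]
      exact h0
    rw [this, zero_mul]
  have hWk : W k = 0 := by
    have hsym : W k = -W k := by
      rw [hW]
      simp only []
      conv_lhs => rw [Finset.sum_comm]
      rw [← Finset.sum_neg_distrib]
      refine Finset.sum_congr rfl fun β _ => ?_
      rw [← Finset.sum_neg_distrib]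
      refine Finset.sum_congr rfl fun α _ => ?_
      rw [show X i * P k β * P k α = X i * P k α * P k β from by ring]
      ring
    linarith
  have hWtop : W (k+1) = cdG L P i k x y - cdG L P i k y x := by
    rw [hW, cdG, cdG, ← Finset.sum_sub_distrib]
    refine Finset.sum_congr rfl fun α _ => ?_
    rw [← Finset.sum_sub_distrib]
    exact Finset.sum_congr rfl fun β _ => by ring
  have hWpred : ∀ k', k = k' + 1 →
      W k' = -(cdG L P i k' x y - cdG L P i k' y x) := by
    intro k' hk
    subst hk
    rw [hW]
    simp only []
    rw [Finset.sum_comm, cdG, cdG, ← Finset.sum_sub_distrib, ← Finset.sum_neg_distrib]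
    refine Finset.sum_congr rfl fun β _ => ?_
    rw [← Finset.sum_sub_distrib, ← Finset.sum_neg_distrib]
    refine Finset.sum_congr rfl fun α _ => ?_
    rw [show X i * P (k'+1) α * P k' β = X i * P k' β * P (k'+1) α by ring]
    ring
  rw [hLHS]
  match k, hWlow, hWk, hWtop, hWpred with
  | 0, hWlow, hWk, hWtop, hWpred =>
    rw [Finset.sum_range_succ, Finset.sum_range_one, hWk, hWtop, zero_add, sub_zero]
  | (k'+1), hWlow, hWk, hWtop, hWpred =>
    rw [show k' + 1 + 2 = (k' + 2) + 1 by ring, Finset.sum_range_succ,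
      Finset.sum_range_succ, Finset.sum_range_succ, hWk, hWtop,
      hWpred k' rfl, Finset.sum_eq_zero fun m hm =>
        hWlow m (by simpa using Nat.succ_lt_succ (Finset.mem_range.1 hm))]
    ring


/-- The Christoffel–Darboux formula:
`(x_i − y_i) K_n(x,y) = [A_{n,i} ℙ_{n+1}(x)]ᵀ ℙ_n(y) − ℙ_nᵀ(x) [A_{n,i} ℙ_{n+1}(y)]`,
where `K_n(x,y) = Σ_{k≤n} ℙ_kᵀ(x) ℙ_k(y)` and `A_{n,i} = L(x_i ℙ_n ℙ_{n+1}ᵀ)`. -/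
theorem christoffel_darboux_formula
    (L : MPoly d →ₗ[ℝ] ℝ)
    (hL : ∀ p : MPoly d, p ≠ 0 → 0 < L (p * p))
    (P : ∀ n, Idx d n → MPoly d)
    (hdeg : ∀ n (α : Idx d n), (P n α).totalDegree = n)
    (hspan : SpansPi P)
    (hon : ∀ n (α β : Idx d n), L (P n α * P n β) = if α = β then 1 else 0)
    (hoff : ∀ n m : ℕ, n ≠ m → ∀ (α : Idx d n) (β : Idx d m), L (P n α * P m β) = 0)
    (n : ℕ) (i : Fin d) (x y : Fin d → ℝ) :
    (x i - y i) *
        (∑ k ∈ Finset.range (n+1), ∑ α : Idx d k, eval x (P k α) * eval y (P k α)) =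
      (∑ α : Idx d n,
        (∑ β : Idx d (n+1), L (X i * P n α * P (n+1) β) * eval x (P (n+1) β)) *
          eval y (P n α)) -
      (∑ α : Idx d n,
        eval x (P n α) *
          ∑ β : Idx d (n+1), L (X i * P n α * P (n+1) β) * eval y (P (n+1) β)) := by
  set F : ℕ → ℝ := fun k =>
    match k with
    | 0 => 0
    | k' + 1 => cdG L P i k' x y - cdG L P i k' y x with hF
  have hstep : ∀ k, (x i - y i) * ∑ α : Idx d k, eval x (P k α) * eval y (P k α) =
      F (k+1) - F k := by
    intro k
    rw [cd_step L P hdeg hspan hon hoff i x y k]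
  have htel : (x i - y i) *
      (∑ k ∈ Finset.range (n+1), ∑ α : Idx d k, eval x (P k α) * eval y (P k α)) =
      cdG L P i n x y - cdG L P i n y x := by
    rw [Finset.mul_sum, Finset.sum_congr rfl fun k _ => hstep k,
      Finset.sum_range_sub F (n+1)]
    exact sub_zero _
  rw [htel]
  have h1 : (∑ α : Idx d n,
      (∑ β : Idx d (n+1), L (X i * P n α * P (n+1) β) * eval x (P (n+1) β)) *
        eval y (P n α)) = cdG L P i n x y := by
    rw [cdG]
    refine Finset.sum_congr rfl fun α _ => ?_
    rw [Finset.sum_mul]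
  have h2 : (∑ α : Idx d n,
      eval x (P n α) *
        ∑ β : Idx d (n+1), L (X i * P n α * P (n+1) β) * eval y (P (n+1) β)) =
      cdG L P i n y x := by
    rw [cdG]
    refine Finset.sum_congr rfl fun α _ => ?_
    rw [Finset.mul_sum]
    exact Finset.sum_congr rfl fun β _ => by ring
  rw [h1, h2]
end
end
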